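/- Let n ≥ 1 and let a, a′, b, b′ be Hermitian n×n complex matrices with a² = a′² = b² = b′² = 1 (the identity matrix), such that each of a, a′ commutes with each of b, b′. Let W be a positive semidefinite n×n complex matrix with trace 1. Then |Tr(W(ab + ab′ + a′b − a′b′))| ≤ 2√2 (the Cirel'son bound). -/

import Mathlib

open Matrix ComplexOrder

/-- Cauchy–Schwarz for the Frobenius inner product on complex matrices. -/
lemma cirelson_trace_cs (n : ℕ) (A B : Matrix (Fin n) (Fin n) ℂ) :
    ‖(Aᴴ * B).trace‖ ^ 2 ≤ ((Aᴴ * A).trace).re * ((Bᴴ * B).trace).re := by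
  let f : EuclideanSpace ℂ (Fin n × Fin n) := WithLp.toLp 2 (fun p : Fin n × Fin n => A p.2 p.1)
  let g : EuclideanSpace ℂ (Fin n × Fin n) := WithLp.toLp 2 (fun p : Fin n × Fin n => B p.2 p.1)
  have htr : ∀ M N : Matrix (Fin n) (Fin n) ℂ,
      (Mᴴ * N).trace = ∑ p : Fin n × Fin n, (starRingEnd ℂ) (M p.2 p.1) * N p.2 p.1 := by
    intro M N
    rw [Fintype.sum_prod_type]
    simp [Matrix.trace, Matrix.diag, Matrix.mul_apply, Matrix.conjTranspose_apply]
  have hinner : ∀ x y : EuclideanSpace ℂ (Fin n × Fin n),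
      (inner ℂ x y : ℂ) = ∑ p : Fin n × Fin n, (starRingEnd ℂ) (x p) * y p := by
    intro x y
    simp [PiLp.inner_apply, RCLike.inner_apply, mul_comm]
  have h1 : (Aᴴ * B).trace = (inner ℂ f g : ℂ) := by rw [htr, hinner]
  have h2 : ((Aᴴ * A).trace).re = ‖f‖ ^ 2 := by
    rw [← inner_self_eq_norm_sq (𝕜 := ℂ) f, htr, hinner]; rfl
  have h3 : ((Bᴴ * B).trace).re = ‖g‖ ^ 2 := by
    rw [← inner_self_eq_norm_sq (𝕜 := ℂ) g, htr, hinner]; rfl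
  rw [h1, h2, h3]
  calc ‖(inner ℂ f g : ℂ)‖ ^ 2 ≤ (‖f‖ * ‖g‖) ^ 2 :=
        pow_le_pow_left₀ (norm_nonneg _) (norm_inner_le_norm f g) 2
      _ = ‖f‖ ^ 2 * ‖g‖ ^ 2 := by ring

/-- The trace of a positive semidefinite complex matrix has nonnegative real part. -/
lemma cirelson_trace_re_nonneg {n : ℕ} {M : Matrix (Fin n) (Fin n) ℂ} (hM : M.PosSemidef) :
    0 ≤ M.trace.re := by
  have : M.trace = ∑ i, M i i := rfl
  rw [this, Complex.re_sum]
  refine Finset.sum_nonneg fun i _ => ?_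
  have := hM.re_dotProduct_nonneg (Pi.single i 1)
  simpa [dotProduct, Matrix.mulVec, Pi.single_apply, Finset.sum_ite_eq,
    Finset.mul_sum] using this

/-- The key algebraic identity: `C² = 8·1 − S₁S₁ᴴ − S₂S₂ᴴ`. -/
lemma cirelson_key (n : ℕ) (a a' b b' : Matrix (Fin n) (Fin n) ℂ)
    (ha : a.IsHermitian) (ha' : a'.IsHermitian)
    (hb : b.IsHermitian) (hb' : b'.IsHermitian)
    (ha2 : a * a = 1) (ha'2 : a' * a' = 1)
    (hb2 : b * b = 1) (hb'2 : b' * b' = 1)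
    (hab : Commute a b) (hab' : Commute a b')
    (ha'b : Commute a' b) (ha'b' : Commute a' b') :
    (a * b + a * b' + a' * b - a' * b') * (a * b + a * b' + a' * b - a' * b')
      = (8 : ℂ) • 1 - ((1 + a * a' * b * b') * (1 + a * a' * b * b')ᴴ
          + (1 - a * a' * b' * b) * (1 - a * a' * b' * b)ᴴ) := by
  have sw : ∀ x y : Matrix (Fin n) (Fin n) ℂ, Commute x y →
      ∀ z, y * (x * z) = x * (y * z) := fun x y h z => by
    rw [← mul_assoc, ← h.eq, mul_assoc]
  have sq : ∀ x : Matrix (Fin n) (Fin n) ℂ, x * x = 1 → ∀ z, x * (x * z) = z :=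
    fun x h z => by rw [← mul_assoc, h, one_mul]
  have swab := sw a b hab
  have swab' := sw a b' hab'
  have swa'b := sw a' b ha'b
  have swa'b' := sw a' b' ha'b'
  have sqa := sq a ha2
  have sqa' := sq a' ha'2
  have sqb := sq b hb2
  have sqb' := sq b' hb'2
  simp only [conjTranspose_add, conjTranspose_sub, conjTranspose_mul, conjTranspose_one,
    ha.eq, ha'.eq, hb.eq, hb'.eq]
  simp only [mul_add, add_mul, mul_sub, sub_mul, mul_assoc, mul_one, one_mul]
  simp only [swab, swab', swa'b, swa'b', sqa, sqa', sqb, sqb',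
    hab.symm.eq, hab'.symm.eq, ha'b.symm.eq, ha'b'.symm.eq, ha2, ha'2, hb2, hb'2]
  have h8 : (8 : ℂ) • (1 : Matrix (Fin n) (Fin n) ℂ)
      = 1 + 1 + 1 + 1 + 1 + 1 + 1 + 1 := by
    rw [show (8:ℂ) = ((8:ℕ):ℂ) by norm_num, Nat.cast_smul_eq_nsmul]
    abel
  rw [h8]
  abel_nf

/-- the Cirel'son bound. For Hermitian `n×n` complex matrices `a, a', b, b'`
squaring to the identity, with each of `a, a'` commuting with each of `b, b'`, and a density
matrix `W` (positive semidefinite of trace 1),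
`|Tr(W(ab + ab' + a'b − a'b'))| ≤ 2√2`. -/
theorem cirelson_bound
    (n : ℕ) (hn : 1 ≤ n)
    (a a' b b' W : Matrix (Fin n) (Fin n) ℂ)
    (ha : a.IsHermitian) (ha' : a'.IsHermitian)
    (hb : b.IsHermitian) (hb' : b'.IsHermitian)
    (ha2 : a * a = 1) (ha'2 : a' * a' = 1)
    (hb2 : b * b = 1) (hb'2 : b' * b' = 1)
    (hab : Commute a b) (hab' : Commute a b')
    (ha'b : Commute a' b) (ha'b' : Commute a' b')
    (hW : W.PosSemidef) (hWtr : W.trace = 1) :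
    ‖(W * (a * b + a * b' + a' * b - a' * b')).trace‖ ≤ 2 * Real.sqrt 2 := by
  set C : Matrix (Fin n) (Fin n) ℂ := a * b + a * b' + a' * b - a' * b' with hCdef
  -- C is Hermitian
  have hC : Cᴴ = C := by
    rw [hCdef]
    simp only [conjTranspose_add, conjTranspose_sub, conjTranspose_mul,
      ha.eq, ha'.eq, hb.eq, hb'.eq]
    rw [← hab.eq, ← hab'.eq, ← ha'b.eq, ← ha'b'.eq]
  set R : Matrix (Fin n) (Fin n) ℂ := (open scoped MatrixOrder in CFC.sqrt W) with hRdef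
  have hRH : Rᴴ = R := (open scoped MatrixOrder in (CFC.sqrt_nonneg W).posSemidef.1)
  have hRR : R * R = W := (open scoped MatrixOrder in CFC.sqrt_mul_sqrt_self W hW.nonneg)
  -- Cauchy–Schwarz
  have hcs := cirelson_trace_cs n R (R * C)
  rw [hRH] at hcs
  have e1 : R * (R * C) = W * C := by rw [← mul_assoc, hRR]
  have e2 : ((R * C)ᴴ * (R * C)).trace = (W * (C * C)).trace := by
    rw [conjTranspose_mul, hC, hRH, mul_assoc, e1, trace_mul_comm, mul_assoc]
  rw [e1, hRR, e2, hWtr] at hcs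
  -- bound the second factor using the key identity
  have key := cirelson_key n a a' b b' ha ha' hb hb' ha2 ha'2 hb2 hb'2 hab hab' ha'b ha'b'
  rw [← hCdef] at key
  set S₁ : Matrix (Fin n) (Fin n) ℂ := 1 + a * a' * b * b' with hS1
  set S₂ : Matrix (Fin n) (Fin n) ℂ := 1 - a * a' * b' * b with hS2
  have ht1 : 0 ≤ ((W * (S₁ * S₁ᴴ)).trace).re := by
    have : (W * (S₁ * S₁ᴴ)).trace = (S₁ᴴ * W * S₁).trace := by
      rw [← mul_assoc, trace_mul_comm, mul_assoc, ← mul_assoc]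
    rw [this]
    exact cirelson_trace_re_nonneg (hW.conjTranspose_mul_mul_same S₁)
  have ht2 : 0 ≤ ((W * (S₂ * S₂ᴴ)).trace).re := by
    have : (W * (S₂ * S₂ᴴ)).trace = (S₂ᴴ * W * S₂).trace := by
      rw [← mul_assoc, trace_mul_comm, mul_assoc, ← mul_assoc]
    rw [this]
    exact cirelson_trace_re_nonneg (hW.conjTranspose_mul_mul_same S₂)
  have hbound : ((W * (C * C)).trace).re ≤ 8 := by
    rw [key]
    have : W * ((8 : ℂ) • 1 - (S₁ * S₁ᴴ + S₂ * S₂ᴴ))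
        = (8 : ℂ) • W - (W * (S₁ * S₁ᴴ) + W * (S₂ * S₂ᴴ)) := by
      rw [mul_sub, mul_add, mul_smul_comm, mul_one]
    rw [this, trace_sub, trace_add, trace_smul, hWtr]
    simp only [Complex.sub_re, Complex.add_re, smul_eq_mul, mul_one, Complex.ofReal_one]
    have : ((8 : ℂ)).re = 8 := by norm_num
    nlinarith [ht1, ht2]
  -- conclude
  have habs : ‖(W * C).trace‖ ^ 2 ≤ 8 := by
    calc ‖(W * C).trace‖ ^ 2
        ≤ (1 : ℂ).re * ((W * (C * C)).trace).re := hcs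
      _ ≤ 8 := by rw [Complex.one_re, one_mul]; exact hbound
  have hnn : 0 ≤ ‖(W * C).trace‖ := norm_nonneg _
  nlinarith [Real.sq_sqrt (by norm_num : (2:ℝ) ≥ 0), Real.sqrt_nonneg 2, habs, hnn]
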